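/- arXiv:2404.04355 — 3 statements merged into one kernel-verified Lean document; each statement's English description precedes it below -/
import Mathlib

section
/- Let p be a positive integer, let ξ : ℝ^p → ℝ be L_ξ-smooth, and let δ > 0. Then the smooth approximation ξ_δ is differentiable and for every w ∈ ℝ^p, ‖∇ξ_δ(w) − ∇ξ(w)‖ ≤ L_ξ p δ / 2. -/
open MeasureTheory Metric

noncomputable def ballUniform (p : ℕ) : Measure (EuclideanSpace ℝ (Fin p)) :=
  (volume (closedBall (0 : EuclideanSpace ℝ (Fin p)) 1))⁻¹ •
    (volume : Measure (EuclideanSpace ℝ (Fin p))).restrict (closedBall 0 1)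

variable {p : ℕ}

lemma vol_cb_pos (hp : 0 < p) : 0 < volume (closedBall (0 : EuclideanSpace ℝ (Fin p)) 1) :=
  measure_closedBall_pos _ _ one_pos

lemma vol_cb_lt_top : volume (closedBall (0 : EuclideanSpace ℝ (Fin p)) 1) < ⊤ :=
  measure_closedBall_lt_top

lemma ballUniform_prob (hp : 0 < p) : IsProbabilityMeasure (ballUniform p) := by
  constructor
  rw [ballUniform, Measure.smul_apply, Measure.restrict_apply_univ, smul_eq_mul,
    ENNReal.inv_mul_cancel (vol_cb_pos hp).ne' vol_cb_lt_top.ne]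

lemma integrable_ballUniform {X : Type*} [NormedAddCommGroup X]
    {g : EuclideanSpace ℝ (Fin p) → X} (hg : Continuous g) :
    Integrable g (ballUniform p) := by
  rw [ballUniform]
  exact (hg.continuousOn.integrableOn_compact (isCompact_closedBall _ _)).smul_measure
    (ENNReal.inv_ne_top.2 (by simpa using (measure_closedBall_pos volume (0:EuclideanSpace ℝ (Fin p)) one_pos).ne'))

lemma integral_norm_ballUniform (hp : 0 < p) :
    ∫ v, ‖v‖ ∂(ballUniform p) ≤ (p : ℝ) / 2 := by
  haveI : Nonempty (Fin p) := ⟨⟨0, hp⟩⟩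
  haveI : Nontrivial (EuclideanSpace ℝ (Fin p)) := inferInstance
  have hcb : MeasurableSet (closedBall (0 : EuclideanSpace ℝ (Fin p)) 1) :=
    measurableSet_closedBall
  -- the set integral over the closed ball
  set f : ℝ → ℝ := fun r => if r ≤ 1 then r else 0 with hf
  have h1 : ∫ x in closedBall (0 : EuclideanSpace ℝ (Fin p)) 1, ‖x‖ ∂volume
      = ∫ x : EuclideanSpace ℝ (Fin p), f ‖x‖ ∂volume := by
    rw [← integral_indicator hcb]
    congr 1
    ext x
    by_cases hx : x ∈ closedBall (0 : EuclideanSpace ℝ (Fin p)) 1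
    · simp [Set.indicator_of_mem hx, hf, mem_closedBall_zero_iff.1 hx]
    · have : ¬ ‖x‖ ≤ 1 := by simpa [mem_closedBall_zero_iff] using hx
      simp [Set.indicator_of_notMem hx, hf, this]
  have h2 := integral_fun_norm_addHaar (volume : Measure (EuclideanSpace ℝ (Fin p))) f
  rw [finrank_euclideanSpace_fin] at h2
  have h3 : ∫ y in Set.Ioi (0:ℝ), y ^ (p - 1) • f y = 1 / (p + 1) := by
    have : ∀ y ∈ Set.Ioi (0:ℝ), y ^ (p-1) • f y = Set.indicator (Set.Ioc (0:ℝ) 1) (fun y => y ^ p) y := by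
      intro y hy
      simp only [Set.mem_Ioi] at hy
      by_cases h : y ≤ 1
      · rw [Set.indicator_of_mem (by exact ⟨hy, h⟩)]
        simp only [hf, if_pos h, smul_eq_mul]
        rw [← pow_succ, Nat.sub_add_cancel hp]
      · rw [Set.indicator_of_notMem (by simp [Set.mem_Ioc, h])]
        simp [hf, h]
    rw [setIntegral_congr_fun measurableSet_Ioi this, integral_indicator measurableSet_Ioc,
      Measure.restrict_restrict measurableSet_Ioc]
    have : Set.Ioc (0:ℝ) 1 ∩ Set.Ioi 0 = Set.Ioc (0:ℝ) 1 := by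
      ext y; simp (config := {contextual := true}) [Set.mem_Ioc, Set.mem_Ioi]
    rw [this, ← intervalIntegral.integral_of_le zero_le_one, integral_pow]
    simp
  have hvol : volume (ball (0 : EuclideanSpace ℝ (Fin p)) 1)
      = volume (closedBall (0 : EuclideanSpace ℝ (Fin p)) 1) :=
    (Measure.addHaar_closedBall_eq_addHaar_ball _ _ _).symm
  rw [ballUniform, integral_smul_measure, smul_eq_mul, h1, h2, h3, measureReal_def, hvol, nsmul_eq_mul,
    smul_eq_mul]
  have hc : (volume (closedBall (0 : EuclideanSpace ℝ (Fin p)) 1)).toReal ≠ 0 :=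
    ENNReal.toReal_ne_zero.2 ⟨(vol_cb_pos hp).ne', vol_cb_lt_top.ne⟩
  rw [ENNReal.toReal_inv]
  rw [show (volume (closedBall (0 : EuclideanSpace ℝ (Fin p)) 1)).toReal⁻¹ *
      ((p:ℝ) * ((volume (closedBall (0 : EuclideanSpace ℝ (Fin p)) 1)).toReal * (1 / ((p:ℝ) + 1))))
      = (p:ℝ) / ((p:ℝ) + 1) by field_simp]
  have h1p : (1:ℝ) ≤ p := by exact_mod_cast hp
  gcongr
  linarith

lemma fderiv_eq_toDual_gradient (ξ : EuclideanSpace ℝ (Fin p) → ℝ) (x : EuclideanSpace ℝ (Fin p)) :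
    fderiv ℝ ξ x = InnerProductSpace.toDual ℝ (EuclideanSpace ℝ (Fin p)) (gradient ξ x) :=
  ((InnerProductSpace.toDual ℝ _).apply_symm_apply _).symm

lemma key_hasFDerivAt (ξ : EuclideanSpace ℝ (Fin p) → ℝ) (Lξ : ℝ) (hLξ : 0 ≤ Lξ)
    (hdiff : Differentiable ℝ ξ)
    (hlip : LipschitzWith Lξ.toNNReal (fun x => gradient ξ x))
    (δ : ℝ) (hδ : 0 < δ) (w : EuclideanSpace ℝ (Fin p)) :
    HasFDerivAt (fun w => ∫ v', ξ (w + δ • v') ∂(ballUniform p))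
      (∫ v', fderiv ℝ ξ (w + δ • v') ∂(ballUniform p)) w := by
  have hlipf : LipschitzWith Lξ.toNNReal (fun x => fderiv ℝ ξ x) := by
    have h := (InnerProductSpace.toDual ℝ (EuclideanSpace ℝ (Fin p))).lipschitz.comp hlip
    rw [one_mul] at h
    convert h using 2 with x
    · rfl
    exact fderiv_eq_toDual_gradient ξ _
  have hcf : Continuous (fun x => fderiv ℝ ξ x) := hlipf.continuous
  have hbd : ∀ (v x : EuclideanSpace ℝ (Fin p)), x ∈ ball w 1 →
      ‖fderiv ℝ ξ (x + δ • v)‖ ≤ ‖fderiv ℝ ξ w‖ + Lξ * (1 + δ * ‖v‖) := by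
    intro v x hx
    have h1 : ‖fderiv ℝ ξ (x + δ • v) - fderiv ℝ ξ w‖ ≤ Lξ * ‖x + δ • v - w‖ := by
      have := hlipf.dist_le_mul (x + δ • v) w
      rwa [dist_eq_norm, Real.coe_toNNReal _ hLξ] at this
    have h2 : ‖x + δ • v - w‖ ≤ 1 + δ * ‖v‖ := by
      calc ‖x + δ • v - w‖ = ‖(x - w) + δ • v‖ := by rw [show x + δ • v - w = (x - w) + δ • v by abel]
        _ ≤ ‖x - w‖ + ‖δ • v‖ := norm_add_le _ _
        _ ≤ 1 + δ * ‖v‖ := by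
            rw [norm_smul, Real.norm_eq_abs, abs_of_pos hδ]
            have : ‖x - w‖ ≤ 1 := le_of_lt (by rwa [mem_ball, dist_eq_norm] at hx)
            linarith
    calc ‖fderiv ℝ ξ (x + δ • v)‖
        ≤ ‖fderiv ℝ ξ w‖ + ‖fderiv ℝ ξ (x + δ • v) - fderiv ℝ ξ w‖ := by
          have := norm_add_le (fderiv ℝ ξ w) (fderiv ℝ ξ (x + δ • v) - fderiv ℝ ξ w)
          simpa using this
      _ ≤ ‖fderiv ℝ ξ w‖ + Lξ * (1 + δ * ‖v‖) := by
          have := h1.trans (mul_le_mul_of_nonneg_left h2 hLξ)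
          linarith
  apply hasFDerivAt_integral_of_dominated_of_fderiv_le
    (F' := fun x v => fderiv ℝ ξ (x + δ • v))
    (bound := fun v => ‖fderiv ℝ ξ w‖ + Lξ * (1 + δ * ‖v‖)) (ball_mem_nhds w one_pos)
  · exact Filter.Eventually.of_forall fun x =>
      (hdiff.continuous.comp (continuous_const.add (continuous_const_smul δ))).aestronglyMeasurable
  · exact integrable_ballUniform (hdiff.continuous.comp (continuous_const.add (continuous_const_smul δ)))
  · exact (hcf.comp (continuous_const.add (continuous_const_smul δ))).aestronglyMeasurable
  · exact ae_of_all _ fun v x hx => hbd v x hx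
  · exact integrable_ballUniform (by continuity)
  · refine ae_of_all _ fun v x hx => ?_
    have h := ((hdiff (x + δ • v)).hasFDerivAt).comp x ((hasFDerivAt_id x).add_const (δ • v))
    simp at h
    exact h

/-- If `ξ : ℝ^p → ℝ` is `L_ξ`-smooth and `δ > 0`, then the smooth approximation
`ξ_δ(w) = E_{v' ∼ U(B_p)}[ξ(w + δ v')]` is differentiable and its gradient satisfies
`‖∇ξ_δ(w) - ∇ξ(w)‖ ≤ L_ξ p δ / 2` for every `w`. -/
theorem smoothed_gradient_close
    (p : ℕ) (hp : 0 < p) (ξ : EuclideanSpace ℝ (Fin p) → ℝ) (Lξ : ℝ) (hLξ : 0 ≤ Lξ)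
    (hdiff : Differentiable ℝ ξ)
    (hlip : LipschitzWith Lξ.toNNReal (fun x => gradient ξ x))
    (δ : ℝ) (hδ : 0 < δ) :
    Differentiable ℝ (fun w => ∫ v', ξ (w + δ • v') ∂(ballUniform p)) ∧
    ∀ w : EuclideanSpace ℝ (Fin p),
      ‖gradient (fun w => ∫ v', ξ (w + δ • v') ∂(ballUniform p)) w - gradient ξ w‖
        ≤ Lξ * p * δ / 2 := by
  haveI := ballUniform_prob hp
  have hkey := key_hasFDerivAt ξ Lξ hLξ hdiff hlip δ hδ
  refine ⟨fun w => (hkey w).differentiableAt, fun w => ?_⟩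
  have hlipf : LipschitzWith Lξ.toNNReal (fun x => fderiv ℝ ξ x) := by
    have h := (InnerProductSpace.toDual ℝ (EuclideanSpace ℝ (Fin p))).lipschitz.comp hlip
    rw [one_mul] at h
    convert h using 2 with x
    · rfl
    exact fderiv_eq_toDual_gradient ξ _
  have hfg : fderiv ℝ (fun w => ∫ v', ξ (w + δ • v') ∂(ballUniform p)) w
      = ∫ v', fderiv ℝ ξ (w + δ • v') ∂(ballUniform p) := (hkey w).fderiv
  have hnorm : ‖gradient (fun w => ∫ v', ξ (w + δ • v') ∂(ballUniform p)) w - gradient ξ w‖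
      = ‖fderiv ℝ (fun w => ∫ v', ξ (w + δ • v') ∂(ballUniform p)) w - fderiv ℝ ξ w‖ := by
    rw [gradient, gradient, ← map_sub, LinearIsometryEquiv.norm_map]
  rw [hnorm, hfg]
  have hint1 : Integrable (fun v => fderiv ℝ ξ (w + δ • v)) (ballUniform p) :=
    integrable_ballUniform (hlipf.continuous.comp (continuous_const.add (continuous_const_smul δ)))
  have hconst : (∫ _v' : EuclideanSpace ℝ (Fin p), fderiv ℝ ξ w ∂(ballUniform p)) = fderiv ℝ ξ w := by
    simp
  rw [show (∫ v', fderiv ℝ ξ (w + δ • v') ∂(ballUniform p)) - fderiv ℝ ξ w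
      = ∫ v', (fderiv ℝ ξ (w + δ • v') - fderiv ℝ ξ w) ∂(ballUniform p) by
    rw [integral_sub hint1 (integrable_const _), hconst]]
  have hptwise : ∀ v : EuclideanSpace ℝ (Fin p),
      ‖fderiv ℝ ξ (w + δ • v) - fderiv ℝ ξ w‖ ≤ Lξ * δ * ‖v‖ := by
    intro v
    have := hlipf.dist_le_mul (w + δ • v) w
    rw [dist_eq_norm, Real.coe_toNNReal _ hLξ] at this
    calc ‖fderiv ℝ ξ (w + δ • v) - fderiv ℝ ξ w‖ ≤ Lξ * ‖w + δ • v - w‖ := this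
      _ = Lξ * δ * ‖v‖ := by
          rw [show w + δ • v - w = δ • v by abel, norm_smul, Real.norm_eq_abs,
            abs_of_pos hδ, mul_assoc]
  calc ‖∫ v', (fderiv ℝ ξ (w + δ • v') - fderiv ℝ ξ w) ∂(ballUniform p)‖
      ≤ ∫ v, Lξ * δ * ‖v‖ ∂(ballUniform p) := by
        refine norm_integral_le_of_norm_le ?_ (ae_of_all _ hptwise)
        exact integrable_ballUniform (by continuity)
    _ = Lξ * δ * ∫ v, ‖v‖ ∂(ballUniform p) := integral_const_mul _ _
    _ ≤ Lξ * δ * ((p : ℝ) / 2) := by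
        apply mul_le_mul_of_nonneg_left (integral_norm_ballUniform hp) (by positivity)
    _ = Lξ * p * δ / 2 := by ring
end

section
/- Let J : ℝ^p → ℝ be L-smooth (L > 0) with J* := inf J > −∞, let M_Φ ≥ 0, let (ε_{H,k})_{k≥0} be nonnegative reals, and let (ε_k)_{k≥0} be vectors in ℝ^p with ‖ε_k‖ ≤ M_Φ ε_{H,k} for all k. Let η ∈ (0, 1/(4L)] and define the deterministic inexact gradient iteration w_{k+1} = w_k − η (∇J(w_k) − ε_k) from an arbitrary w_0 ∈ ℝ^p. Then for every positive integer T, (1/T) Σ_{k=0}^{T−1} ‖∇J(w_k)‖² ≤ 4 (J(w_0) − J*)/(η T) + (3 M_Φ² / T) Σ_{k=0}^{T−1} ε_{H,k}²; in particular, for η = 1/(4L) the first term equals 16 L (J(w_0) − J*)/T. -/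
open Finset

open intervalIntegral in
lemma descent_lemma {F : Type*} [NormedAddCommGroup F] [InnerProductSpace ℝ F]
    [CompleteSpace F]
    (J : F → ℝ) (L : ℝ) (hL : 0 < L) (hdiff : Differentiable ℝ J)
    (hlip : LipschitzWith L.toNNReal (fun x => gradient J x)) (x y : F) :
    J y ≤ J x + inner ℝ (gradient J x) (y - x) + L / 2 * ‖y - x‖ ^ 2 := by
  set v := y - x with hv
  set φ : ℝ → ℝ := fun t => J (x + t • v) with hφ
  have hline : ∀ t : ℝ, HasDerivAt (fun t : ℝ => x + t • v) v t := by
    intro t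
    simpa using ((hasDerivAt_id t).smul_const v).const_add x
  have hderiv : ∀ t : ℝ, HasDerivAt φ (inner ℝ (gradient J (x + t • v)) v : ℝ) t := by
    intro t
    have h1 := ((hdiff (x + t • v)).hasGradientAt.hasFDerivAt).comp_hasDerivAt t (hline t)
    simpa [InnerProductSpace.toDual_apply_apply, hφ, Function.comp_def] using h1
  have hcont : Continuous fun t : ℝ => (inner ℝ (gradient J (x + t • v)) v : ℝ) := by
    apply Continuous.inner
    · exact hlip.continuous.comp (by continuity)
    · exact continuous_const
  have hint : J (x + (1:ℝ) • v) - J (x + (0:ℝ) • v)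
      = ∫ t in (0:ℝ)..1, (inner ℝ (gradient J (x + t • v)) v : ℝ) := by
    exact (integral_eq_sub_of_hasDerivAt (fun t _ => hderiv t)
      (hcont.intervalIntegrable 0 1)).symm
  have hbound : ∀ t ∈ Set.Icc (0:ℝ) 1,
      (inner ℝ (gradient J (x + t • v)) v : ℝ) ≤ inner ℝ (gradient J x) v + L * t * ‖v‖ ^ 2 := by
    intro t ht
    have h1 : (inner ℝ (gradient J (x + t • v)) v : ℝ) - inner ℝ (gradient J x) v
        = inner ℝ (gradient J (x + t • v) - gradient J x) v := by
      rw [inner_sub_left]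
    have h2 : ‖gradient J (x + t • v) - gradient J x‖ ≤ L * (t * ‖v‖) := by
      have := hlip.dist_le_mul (x + t • v) x
      simp only [dist_eq_norm] at this
      have he : x + t • v - x = t • v := by abel
      rw [he] at this
      calc ‖gradient J (x + t • v) - gradient J x‖ ≤ L.toNNReal * ‖t • v‖ := this
        _ = L * (|t| * ‖v‖) := by rw [norm_smul]; simp [Real.coe_toNNReal _ hL.le, Real.norm_eq_abs]
        _ = L * (t * ‖v‖) := by rw [abs_of_nonneg ht.1]
    have h3 : (inner ℝ (gradient J (x + t • v) - gradient J x) v : ℝ)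
        ≤ ‖gradient J (x + t • v) - gradient J x‖ * ‖v‖ := real_inner_le_norm _ _
    nlinarith [norm_nonneg v]
  have hintle : ∫ t in (0:ℝ)..1, (inner ℝ (gradient J (x + t • v)) v : ℝ)
      ≤ ∫ t in (0:ℝ)..1, (inner ℝ (gradient J x) v + L * t * ‖v‖ ^ 2) := by
    apply integral_mono_on (by norm_num) (hcont.intervalIntegrable 0 1)
      ((by continuity : Continuous fun t : ℝ => (inner ℝ (gradient J x) v : ℝ) + L * t * ‖v‖ ^ 2).intervalIntegrable 0 1)
    exact hbound
  have hrhs : ∫ t in (0:ℝ)..1, (inner ℝ (gradient J x) v + L * t * ‖v‖ ^ 2)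
      = inner ℝ (gradient J x) v + L / 2 * ‖v‖ ^ 2 := by
    rw [integral_add (intervalIntegrable_const) ((by fun_prop : Continuous fun t : ℝ => L * t * ‖v‖ ^ 2).intervalIntegrable 0 1)]
    simp only [integral_const]
    have : ∫ t in (0:ℝ)..1, L * t * ‖v‖ ^ 2 = L / 2 * ‖v‖ ^ 2 := by
      have : (fun t : ℝ => L * t * ‖v‖ ^ 2) = fun t : ℝ => (L * ‖v‖ ^ 2) * t := by
        ext t; ring
      rw [this, integral_const_mul, integral_id]
      ring
    rw [this]
    rw [smul_eq_mul]; ring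
  have hx0 : x + (0:ℝ) • v = x := by simp
  have hx1 : x + (1:ℝ) • v = y := by simp [hv]
  rw [hx0, hx1] at hint
  linarith [hint ▸ (hintle.trans_eq hrhs)]

set_option maxHeartbeats 2000000 in
/-- Performance of the deterministic model-based controller (inexact gradient descent):
if `J` is `L`-smooth, bounded below, `‖ε_k‖ ≤ M_Φ ε_{H,k}`, `η ∈ (0, 1/(4L)]`, and
`w_{k+1} = w_k - η (∇J(w_k) - ε_k)`, then for every `T ≥ 1`,
`(1/T) Σ_{k<T} ‖∇J(w_k)‖² ≤ 4 (J(w_0) - J*)/(η T) + (3 M_Φ²/T) Σ_{k<T} ε_{H,k}²`;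
in particular for `η = 1/(4L)` the first term equals `16 L (J(w_0) - J*)/T`. -/
theorem model_based_inexact_gradient_descent
    (p : ℕ) (hp : 0 < p) (J : EuclideanSpace ℝ (Fin p) → ℝ) (L : ℝ) (hL : 0 < L)
    (hdiff : Differentiable ℝ J)
    (hlip : LipschitzWith L.toNNReal (fun x => gradient J x))
    (hbdd : BddBelow (Set.range J))
    (MΦ : ℝ) (hMΦ : 0 ≤ MΦ) (εH : ℕ → ℝ) (hεH : ∀ k, 0 ≤ εH k)
    (ε : ℕ → EuclideanSpace ℝ (Fin p)) (hε : ∀ k, ‖ε k‖ ≤ MΦ * εH k)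
    (η : ℝ) (hη0 : 0 < η) (hη1 : η ≤ 1 / (4 * L))
    (w : ℕ → EuclideanSpace ℝ (Fin p))
    (hw : ∀ k : ℕ, w (k + 1) = w k - η • (gradient J (w k) - ε k)) :
    ∀ T : ℕ, 0 < T →
      ((1 / (T : ℝ)) * ∑ k ∈ range T, ‖gradient J (w k)‖ ^ 2
        ≤ 4 * (J (w 0) - sInf (Set.range J)) / (η * T)
          + (3 * MΦ ^ 2 / T) * ∑ k ∈ range T, εH k ^ 2) ∧
      (η = 1 / (4 * L) →
        4 * (J (w 0) - sInf (Set.range J)) / (η * T)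
          = 16 * L * (J (w 0) - sInf (Set.range J)) / T) := by
  have hLη : L * η ≤ 1 / 4 := by
    have h := mul_le_mul_of_nonneg_left hη1 hL.le
    have h4 : L * (1 / (4 * L)) = 1 / 4 := by field_simp
    linarith
  have key : ∀ k : ℕ, η / 4 * ‖gradient J (w k)‖ ^ 2
      ≤ J (w k) - J (w (k + 1)) + 3 * η / 4 * (MΦ ^ 2 * εH k ^ 2) := by
    intro k
    set g := gradient J (w k) with hg
    set e := ε k with he
    have hdesc := descent_lemma J L hL hdiff hlip (w k) (w (k + 1))
    have hdif : w (k + 1) - w k = -(η • (g - e)) := by rw [hw k]; abel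
    rw [hdif] at hdesc
    have hinner : (inner ℝ g (-(η • (g - e))) : ℝ) = -(η * (‖g‖ ^ 2 - inner ℝ g e)) := by
      rw [inner_neg_right, real_inner_smul_right, inner_sub_right,
        real_inner_self_eq_norm_sq]
    have hnorm : ‖-(η • (g - e))‖ ^ 2 = η ^ 2 * ‖g - e‖ ^ 2 := by
      rw [norm_neg, norm_smul, Real.norm_eq_abs, mul_pow, sq_abs]
    rw [hinner, hnorm] at hdesc
    have hsub : ‖g - e‖ ≤ ‖g‖ + ‖e‖ := norm_sub_le _ _
    have hie : (inner ℝ g e : ℝ) ≤ ‖g‖ * ‖e‖ := real_inner_le_norm _ _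
    have hεk : ‖e‖ ≤ MΦ * εH k := hε k
    have hεk2 : ‖e‖ ^ 2 ≤ MΦ ^ 2 * εH k ^ 2 := by
      rw [← mul_pow]; exact pow_le_pow_left₀ (norm_nonneg _) hεk 2
    have hgg : ‖g - e‖ ^ 2 ≤ 2 * ‖g‖ ^ 2 + 2 * ‖e‖ ^ 2 := by
      nlinarith [mul_self_le_mul_self (norm_nonneg (g - e)) hsub, sq_nonneg (‖g‖ - ‖e‖)]
    have hA : L / 2 * (η ^ 2 * ‖g - e‖ ^ 2) ≤ η / 4 * (‖g‖ ^ 2 + ‖e‖ ^ 2) := by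
      have h1 : L * η ^ 2 ≤ η / 4 := by nlinarith
      calc L / 2 * (η ^ 2 * ‖g - e‖ ^ 2) = (L * η ^ 2) / 2 * ‖g - e‖ ^ 2 := by ring
        _ ≤ (η / 4) / 2 * ‖g - e‖ ^ 2 := by
            exact mul_le_mul_of_nonneg_right (by linarith) (sq_nonneg _)
        _ ≤ (η / 4) / 2 * (2 * ‖g‖ ^ 2 + 2 * ‖e‖ ^ 2) := by
            exact mul_le_mul_of_nonneg_left hgg (by positivity)
        _ = η / 4 * (‖g‖ ^ 2 + ‖e‖ ^ 2) := by ring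
    have hB : η * (inner ℝ g e : ℝ) ≤ η * (‖g‖ ^ 2 / 2 + ‖e‖ ^ 2 / 2) := by
      have h1 : (inner ℝ g e : ℝ) ≤ ‖g‖ ^ 2 / 2 + ‖e‖ ^ 2 / 2 := by
        nlinarith [hie, sq_nonneg (‖g‖ - ‖e‖)]
      exact mul_le_mul_of_nonneg_left h1 hη0.le
    have hC : η * ‖e‖ ^ 2 ≤ η * (MΦ ^ 2 * εH k ^ 2) := mul_le_mul_of_nonneg_left hεk2 hη0.le
    linarith
  intro T hT
  have hT' : (0:ℝ) < T := by exact_mod_cast hT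
  set Jstar := sInf (Set.range J) with hJstar
  set S := ∑ k ∈ range T, ‖gradient J (w k)‖ ^ 2 with hS
  set E := ∑ k ∈ range T, εH k ^ 2 with hE
  have hsum : η / 4 * S ≤ (J (w 0) - J (w T)) + 3 * η / 4 * (MΦ ^ 2 * E) := by
    have h1 : ∑ k ∈ range T, (η / 4 * ‖gradient J (w k)‖ ^ 2)
        ≤ ∑ k ∈ range T, (J (w k) - J (w (k + 1)) + 3 * η / 4 * (MΦ ^ 2 * εH k ^ 2)) :=
      Finset.sum_le_sum fun k _ => key k
    rw [Finset.sum_add_distrib, Finset.sum_range_sub' (fun k => J (w k)) T] at h1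
    rw [hS, Finset.mul_sum]
    calc ∑ k ∈ range T, η / 4 * ‖gradient J (w k)‖ ^ 2
        ≤ J (w 0) - J (w T) + ∑ k ∈ range T, 3 * η / 4 * (MΦ ^ 2 * εH k ^ 2) := h1
      _ = J (w 0) - J (w T) + 3 * η / 4 * (MΦ ^ 2 * E) := by
          have : ∑ k ∈ range T, 3 * η / 4 * (MΦ ^ 2 * εH k ^ 2)
              = 3 * η / 4 * (MΦ ^ 2 * E) := by
            rw [hE, Finset.mul_sum, Finset.mul_sum]
          rw [this]
  have hJT : Jstar ≤ J (w T) := csInf_le hbdd ⟨w T, rfl⟩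
  have hS0 : 0 ≤ S := Finset.sum_nonneg fun k _ => sq_nonneg _
  have hE0 : 0 ≤ E := Finset.sum_nonneg fun k _ => sq_nonneg _
  have h2 : η * S ≤ 4 * (J (w 0) - Jstar) + 3 * η * (MΦ ^ 2 * E) := by linarith
  have hηT : 0 < η * T := mul_pos hη0 hT'
  constructor
  · calc (1 / (T:ℝ)) * S = (η * S) / (η * T) := by
          field_simp
      _ ≤ (4 * (J (w 0) - Jstar) + 3 * η * (MΦ ^ 2 * E)) / (η * T) := by gcongr
      _ = 4 * (J (w 0) - Jstar) / (η * T) + (3 * MΦ ^ 2 / T) * E := by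
          field_simp
  · intro hηeq
    rw [hηeq]
    field_simp
    ring
end

section
/- Let p be a positive integer, T a positive integer, D̄ ≥ 0, and let w_1, …, w_{T+1} and u_1, …, u_T be vectors in ℝ^p with ‖w_k‖ ≤ D̄ for all 1 ≤ k ≤ T+1 and ‖u_k‖ ≤ D̄ for all 1 ≤ k ≤ T. Then Σ_{k=1}^{T} (‖w_k − u_k‖² − ‖w_{k+1} − u_k‖²) ≤ 5 D̄² + 2 D̄ Σ_{k=1}^{T−1} ‖u_k − u_{k+1}‖. -/
open Finset

private lemma key_inner_bound {E : Type*} [NormedAddCommGroup E] [InnerProductSpace ℝ E]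
    (v a b : E) (D : ℝ) (hv : ‖v‖ ≤ D) :
    ‖v - b‖ ^ 2 - ‖v - a‖ ^ 2 ≤ 2 * D * ‖a - b‖ + ‖b‖ ^ 2 - ‖a‖ ^ 2 := by
  have h1 : ‖v - b‖ ^ 2 = ‖v‖ ^ 2 - 2 * inner ℝ v b + ‖b‖ ^ 2 := norm_sub_sq_real v b
  have h2 : ‖v - a‖ ^ 2 = ‖v‖ ^ 2 - 2 * inner ℝ v a + ‖a‖ ^ 2 := norm_sub_sq_real v a
  have h3 : inner ℝ v (a - b) ≤ ‖v‖ * ‖a - b‖ := real_inner_le_norm v (a - b)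
  have h4 : (inner ℝ v (a - b) : ℝ) = inner ℝ v a - inner ℝ v b := inner_sub_right v a b
  have h5 : 0 ≤ ‖a - b‖ := norm_nonneg _
  nlinarith [mul_le_mul_of_nonneg_right hv h5]

/-- Telescoping bound: for vectors `w_1, …, w_{T+1}` and `u_1, …, u_T` of norm at most `D̄`,
`Σ_{k=1}^{T} (‖w_k - u_k‖² - ‖w_{k+1} - u_k‖²) ≤ 5 D̄² + 2 D̄ Σ_{k=1}^{T-1} ‖u_k - u_{k+1}‖`. -/
theorem telescoping_distance_bound
    (p T : ℕ) (hp : 0 < p) (hT : 0 < T) (Dbar : ℝ) (hD : 0 ≤ Dbar)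
    (w u : ℕ → EuclideanSpace ℝ (Fin p))
    (hw : ∀ k, 1 ≤ k → k ≤ T + 1 → ‖w k‖ ≤ Dbar)
    (hu : ∀ k, 1 ≤ k → k ≤ T → ‖u k‖ ≤ Dbar) :
    ∑ k ∈ Icc 1 T, (‖w k - u k‖ ^ 2 - ‖w (k + 1) - u k‖ ^ 2)
      ≤ 5 * Dbar ^ 2 + 2 * Dbar * ∑ k ∈ Icc 1 (T - 1), ‖u k - u (k + 1)‖ := by
  obtain ⟨S, rfl⟩ : ∃ S, T = S + 1 := ⟨T - 1, (Nat.succ_pred_eq_of_pos hT).symm⟩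
  have hIcc : ∀ n : ℕ, ∀ F : ℕ → ℝ, ∑ k ∈ Icc 1 n, F k = ∑ i ∈ range n, F (i + 1) := by
    intro n F
    rw [← Finset.Ico_add_one_right_eq_Icc, Finset.sum_Ico_eq_sum_range]
    simp [Nat.add_comm]
  rw [hIcc, hIcc]
  simp only [Nat.add_sub_cancel]
  -- split the LHS sum
  rw [Finset.sum_sub_distrib, Finset.sum_range_succ' (fun i => ‖w (i + 1) - u (i + 1)‖ ^ 2),
    Finset.sum_range_succ (fun i => ‖w (i + 1 + 1) - u (i + 1)‖ ^ 2)]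
  -- middle part bound
  have hmid : ∑ i ∈ range S, ‖w (i + 1 + 1) - u (i + 1 + 1)‖ ^ 2
        - ∑ i ∈ range S, ‖w (i + 1 + 1) - u (i + 1)‖ ^ 2
      ≤ 2 * Dbar * ∑ i ∈ range S, ‖u (i + 1) - u (i + 1 + 1)‖
        + ‖u (S + 1)‖ ^ 2 - ‖u 1‖ ^ 2 := by
    rw [← Finset.sum_sub_distrib]
    have hstep : ∀ i ∈ range S,
        ‖w (i + 1 + 1) - u (i + 1 + 1)‖ ^ 2 - ‖w (i + 1 + 1) - u (i + 1)‖ ^ 2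
        ≤ 2 * Dbar * ‖u (i + 1) - u (i + 1 + 1)‖
          + (‖u (i + 1 + 1)‖ ^ 2 - ‖u (i + 1)‖ ^ 2) := by
      intro i hi
      have hi' : i < S := Finset.mem_range.mp hi
      have hwb : ‖w (i + 1 + 1)‖ ≤ Dbar := hw _ (by omega) (by omega)
      have := key_inner_bound (w (i + 1 + 1)) (u (i + 1)) (u (i + 1 + 1)) Dbar hwb
      linarith
    calc ∑ i ∈ range S, (‖w (i + 1 + 1) - u (i + 1 + 1)‖ ^ 2 - ‖w (i + 1 + 1) - u (i + 1)‖ ^ 2)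
        ≤ ∑ i ∈ range S, (2 * Dbar * ‖u (i + 1) - u (i + 1 + 1)‖
            + (‖u (i + 1 + 1)‖ ^ 2 - ‖u (i + 1)‖ ^ 2)) := Finset.sum_le_sum hstep
      _ = 2 * Dbar * ∑ i ∈ range S, ‖u (i + 1) - u (i + 1 + 1)‖
            + (‖u (S + 1)‖ ^ 2 - ‖u 1‖ ^ 2) := by
          rw [Finset.sum_add_distrib, Finset.mul_sum,
            Finset.sum_range_sub (fun i => ‖u (i + 1)‖ ^ 2)]
      _ = _ := by ring
  -- remaining boundary terms
  have hf1 : ‖w 1 - u 1‖ ^ 2 ≤ 4 * Dbar ^ 2 := by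
    have h1 : ‖w 1 - u 1‖ ≤ ‖w 1‖ + ‖u 1‖ := norm_sub_le _ _
    have h2 : ‖w 1‖ ≤ Dbar := hw 1 (by omega) (by omega)
    have h3 : ‖u 1‖ ≤ Dbar := hu 1 (by omega) (by omega)
    nlinarith [norm_nonneg (w 1 - u 1)]
  have hgT : (0:ℝ) ≤ ‖w (S + 1 + 1) - u (S + 1)‖ ^ 2 := by positivity
  have huT : ‖u (S + 1)‖ ^ 2 ≤ Dbar ^ 2 := by
    have := hu (S + 1) (by omega) (by omega)
    nlinarith [norm_nonneg (u (S + 1))]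
  have hu1 : (0:ℝ) ≤ ‖u 1‖ ^ 2 := by positivity
  linarith
end
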